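/- Let λ > 0 and let (y, z) ∈ ℝ² with (y, z) ≠ (0, 0). Then (1/(2π)) ∫_{-π/2}^{π/2} ∫_{-π/2}^{π/2} exp(i (2π/λ)(y cos θ sin φ + z sin θ)) cos θ dφ dθ = sin(2π √(y² + z²)/λ) / (2π √(y² + z²)/λ). In other words, the expectation of the plane-wave phase factor exp(i k(φ,θ)ᵀ v) over azimuth angle φ and elevation angle θ distributed with joint probability density f(φ,θ) = cos(θ)/(2π) on [-π/2, π/2]² equals sinc(2‖v‖/λ) for any displacement vector v = (0, y, z) lying in the plane of the surface. -/

import Mathlib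

open Real intervalIntegral
open MeasureTheory Set

noncomputable def Mc (a b c d : ℝ) : ℝ × ℝ →L[ℝ] ℝ × ℝ :=
  ((a • ContinuousLinearMap.fst ℝ ℝ ℝ + b • ContinuousLinearMap.snd ℝ ℝ ℝ).prod
   (c • ContinuousLinearMap.fst ℝ ℝ ℝ + d • ContinuousLinearMap.snd ℝ ℝ ℝ))

lemma Mc_apply (a b c d : ℝ) (p : ℝ × ℝ) :
    Mc a b c d p = (a * p.1 + b * p.2, c * p.1 + d * p.2) := by
  simp [Mc, smul_eq_mul]

lemma Mc_det (a b c d : ℝ) : (Mc a b c d).det = a * d - b * c := by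
  have h := LinearMap.det_toMatrix (Module.Basis.finTwoProd ℝ) ((Mc a b c d) : ℝ × ℝ →ₗ[ℝ] ℝ × ℝ)
  rw [ContinuousLinearMap.det, ← h]
  have : (LinearMap.toMatrix (Module.Basis.finTwoProd ℝ) (Module.Basis.finTwoProd ℝ)
      ((Mc a b c d) : ℝ × ℝ →ₗ[ℝ] ℝ × ℝ)) = !![a, b; c, d] := by
    ext i j
    fin_cases i <;> fin_cases j <;>
      simp [LinearMap.toMatrix_apply, Mc_apply, Module.Basis.coe_finTwoProd_repr]
  rw [this, Matrix.det_fin_two_of]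

noncomputable def gmap : ℝ × ℝ → ℝ × ℝ := fun p => (Real.cos p.1 * Real.sin p.2, Real.sin p.1)

def sq2 : Set (ℝ × ℝ) := Ioo (-(π/2)) (π/2) ×ˢ Ioo (-(π/2)) (π/2)

def disk : Set (ℝ × ℝ) := {u : ℝ × ℝ | u.1 ^ 2 + u.2 ^ 2 < 1}

lemma sq2_measurable : MeasurableSet sq2 := measurableSet_Ioo.prod measurableSet_Ioo

lemma gmap_deriv (p : ℝ × ℝ) :
    HasFDerivAt gmap
      (Mc (-Real.sin p.1 * Real.sin p.2) (Real.cos p.1 * Real.cos p.2) (Real.cos p.1) 0) p := by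
  have h1 : HasFDerivAt (fun q : ℝ × ℝ => Real.cos q.1)
      ((-Real.sin p.1) • (ContinuousLinearMap.fst ℝ ℝ ℝ)) p :=
    (Real.hasDerivAt_cos p.1).comp_hasFDerivAt p (hasFDerivAt_fst)
  have h2 : HasFDerivAt (fun q : ℝ × ℝ => Real.sin q.2)
      ((Real.cos p.2) • (ContinuousLinearMap.snd ℝ ℝ ℝ)) p :=
    (Real.hasDerivAt_sin p.2).comp_hasFDerivAt p (hasFDerivAt_snd)
  have h3 : HasFDerivAt (fun q : ℝ × ℝ => Real.sin q.1)
      ((Real.cos p.1) • (ContinuousLinearMap.fst ℝ ℝ ℝ)) p :=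
    (Real.hasDerivAt_sin p.1).comp_hasFDerivAt p (hasFDerivAt_fst)
  have h12 := h1.mul h2
  have := h12.prodMk h3
  refine this.congr_fderiv ?_
  symm
  apply ContinuousLinearMap.ext
  rintro ⟨x, y⟩
  simp [Mc_apply, smul_eq_mul]
  ring

lemma gmap_inj : InjOn gmap sq2 := by
  rintro ⟨a, b⟩ ⟨ha, hb⟩ ⟨c, d⟩ ⟨hc, hd⟩ h
  simp only [gmap, Prod.mk.injEq] at h
  have hac : a = c := Real.injOn_sin (Ioo_subset_Icc_self ha) (Ioo_subset_Icc_self hc) h.2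
  subst hac
  have hcos : 0 < Real.cos a := Real.cos_pos_of_mem_Ioo ha
  have : Real.sin b = Real.sin d := by
    have := h.1
    exact mul_left_cancel₀ hcos.ne' this
  have hbd : b = d := Real.injOn_sin (Ioo_subset_Icc_self hb) (Ioo_subset_Icc_self hd) this
  simp [hbd]

lemma gmap_image : gmap '' sq2 = disk := by
  ext u
  constructor
  · rintro ⟨⟨a, b⟩, ⟨ha, hb⟩, rfl⟩
    have h1 : 0 < Real.cos a := Real.cos_pos_of_mem_Ioo ha
    have h2 : 0 < Real.cos b := Real.cos_pos_of_mem_Ioo hb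
    have e1 : Real.sin a ^ 2 + Real.cos a ^ 2 = 1 := Real.sin_sq_add_cos_sq a
    have e2 : Real.sin b ^ 2 + Real.cos b ^ 2 = 1 := Real.sin_sq_add_cos_sq b
    simp only [disk, gmap, Set.mem_setOf_eq]
    nlinarith [mul_pos h1 h2, sq_nonneg (Real.cos a * Real.cos b),
      mul_pos (mul_pos h1 h2) (mul_pos h1 h2)]
  · intro hu
    have hu' : u.1 ^ 2 + u.2 ^ 2 < 1 := hu
    have h2 : u.2 ^ 2 < 1 := by nlinarith [sq_nonneg u.1]
    have hc : (0:ℝ) < Real.sqrt (1 - u.2 ^ 2) := Real.sqrt_pos.2 (by nlinarith)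
    set c := Real.sqrt (1 - u.2 ^ 2) with hcdef
    have hc2 : c ^ 2 = 1 - u.2 ^ 2 := Real.sq_sqrt (by nlinarith)
    have h1c : u.1 ^ 2 < c ^ 2 := by nlinarith
    have habs : |u.1 / c| < 1 := by
      rw [abs_div, abs_of_pos hc, div_lt_one hc]
      nlinarith [sq_abs u.1, abs_nonneg u.1]
    have habs' : -1 < u.1 / c ∧ u.1 / c < 1 := abs_lt.1 habs
    have hm1 : -1 < u.2 := by nlinarith [sq_abs u.2, abs_nonneg u.2, neg_abs_le u.2]
    have hm2 : u.2 < 1 := by nlinarith [sq_abs u.2, abs_nonneg u.2, le_abs_self u.2]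
    refine ⟨(Real.arcsin u.2, Real.arcsin (u.1 / c)), ⟨⟨?_, ?_⟩, ?_, ?_⟩, ?_⟩
    · exact Real.neg_pi_div_two_lt_arcsin.2 hm1
    · exact Real.arcsin_lt_pi_div_two.2 hm2
    · exact Real.neg_pi_div_two_lt_arcsin.2 habs'.1
    · exact Real.arcsin_lt_pi_div_two.2 habs'.2
    · have e1 : Real.sin (Real.arcsin u.2) = u.2 := Real.sin_arcsin hm1.le hm2.le
      have e2 : Real.sin (Real.arcsin (u.1 / c)) = u.1 / c :=
        Real.sin_arcsin habs'.1.le habs'.2.le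
      have e3 : Real.cos (Real.arcsin u.2) = c := by rw [Real.cos_arcsin]
      simp only [gmap, e1, e2, e3]
      have : c * (u.1 / c) = u.1 := by field_simp
      rw [this]

noncomputable def Fw (a w1 w2 : ℝ) (p : ℝ × ℝ) : ℂ :=
  Complex.exp (Complex.I *
    ((a * (w1 * Real.cos p.1 * Real.sin p.2 + w2 * Real.sin p.1) : ℝ) : ℂ)) *
  ((Real.cos p.1 : ℝ) : ℂ)

noncomputable def hw (a w1 w2 : ℝ) (u : ℝ × ℝ) : ℂ :=
  Complex.exp (Complex.I * ((a * (w1 * u.1 + w2 * u.2) : ℝ) : ℂ)) /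
    ((Real.sqrt (1 - u.1 ^ 2 - u.2 ^ 2) : ℝ) : ℂ)

/-- change of variables from the square to the disk -/
lemma disk_to_sq (a w1 w2 : ℝ) :
    ∫ u in disk, hw a w1 w2 u = ∫ p in sq2, Fw a w1 w2 p := by
  rw [← gmap_image]
  rw [integral_image_eq_integral_abs_det_fderiv_smul volume sq2_measurable
    (fun p _ => (gmap_deriv p).hasFDerivWithinAt) gmap_inj (hw a w1 w2)]
  apply setIntegral_congr_fun sq2_measurable
  rintro ⟨θ, φ⟩ ⟨hθ, hφ⟩
  have c1 : 0 < Real.cos θ := Real.cos_pos_of_mem_Ioo hθ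
  have c2 : 0 < Real.cos φ := Real.cos_pos_of_mem_Ioo hφ
  have hdet : (Mc (-Real.sin θ * Real.sin φ) (Real.cos θ * Real.cos φ) (Real.cos θ) 0).det
      = -(Real.cos θ ^ 2 * Real.cos φ) := by rw [Mc_det]; ring
  have hsqrt : Real.sqrt (1 - (Real.cos θ * Real.sin φ) ^ 2 - Real.sin θ ^ 2)
      = Real.cos θ * Real.cos φ := by
    have e1 : Real.sin θ ^ 2 + Real.cos θ ^ 2 = 1 := Real.sin_sq_add_cos_sq θ
    have e2 : Real.sin φ ^ 2 + Real.cos φ ^ 2 = 1 := Real.sin_sq_add_cos_sq φ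
    have : 1 - (Real.cos θ * Real.sin φ) ^ 2 - Real.sin θ ^ 2
        = (Real.cos θ * Real.cos φ) ^ 2 := by nlinarith
    rw [this, Real.sqrt_sq (by positivity)]
  simp only [hdet, abs_neg, abs_of_pos (by positivity : (0:ℝ) < Real.cos θ ^ 2 * Real.cos φ)]
  simp only [hw, Fw, gmap, hsqrt]
  rw [Complex.real_smul]
  have hne : ((Real.cos θ * Real.cos φ : ℝ) : ℂ) ≠ 0 := by
    exact_mod_cast (by positivity : (Real.cos θ * Real.cos φ : ℝ) ≠ 0)
  have harg : (a * (w1 * (Real.cos θ * Real.sin φ) + w2 * Real.sin θ) : ℝ)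
      = (a * (w1 * Real.cos θ * Real.sin φ + w2 * Real.sin θ) : ℝ) := by ring
  rw [harg, mul_div_assoc']
  rw [div_eq_iff hne]
  push_cast
  ring

lemma disk_measurable : MeasurableSet disk := by
  have : disk = (fun u : ℝ × ℝ => u.1 ^ 2 + u.2 ^ 2) ⁻¹' (Iio 1) := rfl
  rw [this]
  exact (measurable_fst.pow_const 2 |>.add (measurable_snd.pow_const 2)) measurableSet_Iio


lemma disk_rot (a y z r : ℝ) (hr : 0 < r) (hr2 : y ^ 2 + z ^ 2 = r ^ 2) :
    ∫ u in disk, hw a y z u = ∫ u in disk, hw a 0 r u := by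
  have hrne : r ≠ 0 := hr.ne'
  obtain ⟨c, s, hc, hs, hcs⟩ : ∃ c s : ℝ, z = c * r ∧ y = s * r ∧ c ^ 2 + s ^ 2 = 1 :=
    ⟨z / r, y / r, by field_simp, by field_simp, by field_simp; linear_combination hr2⟩
  subst hc hs
  set L := Mc c s (-s) c with hL
  set L' := Mc c (-s) s c with hL'
  have hnorm : ∀ v : ℝ × ℝ, (L v).1 ^ 2 + (L v).2 ^ 2 = v.1 ^ 2 + v.2 ^ 2 := by
    intro v
    rw [Mc_apply]
    linear_combination (v.1 ^ 2 + v.2 ^ 2) * hcs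
  have hnorm' : ∀ v : ℝ × ℝ, (L' v).1 ^ 2 + (L' v).2 ^ 2 = v.1 ^ 2 + v.2 ^ 2 := by
    intro v
    rw [Mc_apply]
    linear_combination (v.1 ^ 2 + v.2 ^ 2) * hcs
  have hLL' : ∀ u : ℝ × ℝ, L (L' u) = u := by
    intro u
    rw [Mc_apply, Mc_apply]
    have e1 : c * (c * u.1 + -s * u.2) + s * (s * u.1 + c * u.2) = u.1 := by
      linear_combination u.1 * hcs
    have e2 : -s * (c * u.1 + -s * u.2) + c * (s * u.1 + c * u.2) = u.2 := by
      linear_combination u.2 * hcs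
    rw [e1, e2]
  have hL'L : ∀ u : ℝ × ℝ, L' (L u) = u := by
    intro u
    rw [Mc_apply, Mc_apply]
    have e1 : c * (c * u.1 + s * u.2) + -s * (-s * u.1 + c * u.2) = u.1 := by
      linear_combination u.1 * hcs
    have e2 : s * (c * u.1 + s * u.2) + c * (-s * u.1 + c * u.2) = u.2 := by
      linear_combination u.2 * hcs
    rw [e1, e2]
  have himg : (fun v => L v) '' disk = disk := by
    ext u
    constructor
    · rintro ⟨v, hv, rfl⟩
      show (L v).1 ^ 2 + (L v).2 ^ 2 < 1
      rw [hnorm]; exact hv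
    · intro hu
      exact ⟨L' u, by show (L' u).1 ^ 2 + (L' u).2 ^ 2 < 1; rw [hnorm']; exact hu, hLL' u⟩
  have hinj : InjOn (fun v => L v) disk := by
    intro v _ w _ h
    have := congrArg L' h
    simpa [hL'L] using this
  have hdet : |(L).det| = 1 := by
    rw [hL, Mc_det]
    have : c * c - s * -s = 1 := by linear_combination hcs
    rw [this, abs_one]
  calc ∫ u in disk, hw a (s * r) (c * r) u
      = ∫ u in (fun v => L v) '' disk, hw a (s * r) (c * r) u := by rw [himg]
    _ = ∫ v in disk, |(L).det| • hw a (s * r) (c * r) (L v) :=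
        integral_image_eq_integral_abs_det_fderiv_smul volume disk_measurable
          (fun p _ => (L.hasFDerivAt).hasFDerivWithinAt) hinj (hw a (s * r) (c * r))
    _ = ∫ v in disk, hw a 0 r v := by
        apply setIntegral_congr_fun disk_measurable
        intro v _
        simp only [hdet, one_smul]
        rw [hL, Mc_apply]
        simp only [hw]
        have e1 : (a * (s * r * (c * v.1 + s * v.2) + c * r * (-s * v.1 + c * v.2)) : ℝ)
            = (a * (0 * v.1 + r * v.2) : ℝ) := by
          linear_combination a * r * v.2 * hcs
        have e2 : (1 : ℝ) - (c * v.1 + s * v.2) ^ 2 - (-s * v.1 + c * v.2) ^ 2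
            = 1 - v.1 ^ 2 - v.2 ^ 2 := by
          have := hnorm v
          rw [hL, Mc_apply] at this
          simp only at this
          linarith
        rw [e1, e2]


lemma fubini_sq (F : ℝ × ℝ → ℂ) (hF : Continuous F) :
    ∫ θ in (-(π/2))..(π/2), ∫ φ in (-(π/2))..(π/2), F (θ, φ) = ∫ p in sq2, F p := by
  have hle : -(π/2) ≤ (π/2) := by linarith [Real.pi_pos]
  have hInt : IntegrableOn F (Ioo (-(π/2)) (π/2) ×ˢ Ioo (-(π/2)) (π/2)) volume := by
    have hcpt : IsCompact (Icc (-(π/2)) (π/2) ×ˢ Icc (-(π/2)) (π/2)) :=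
      isCompact_Icc.prod isCompact_Icc
    exact (hF.continuousOn.integrableOn_compact hcpt).mono_set
      (Set.prod_mono Ioo_subset_Icc_self Ioo_subset_Icc_self)
  rw [intervalIntegral.integral_of_le hle, integral_Ioc_eq_integral_Ioo]
  simp_rw [intervalIntegral.integral_of_le hle, integral_Ioc_eq_integral_Ioo]
  rw [Measure.volume_eq_prod] at hInt
  rw [← setIntegral_prod F hInt, sq2, ← Measure.volume_eq_prod]

lemma int_exp_sin (c : ℝ) (hc : c ≠ 0) :
    (∫ θ in (-(π/2))..(π/2),
      Complex.exp (Complex.I * ((c * Real.sin θ : ℝ) : ℂ)) * ((Real.cos θ : ℝ) : ℂ))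
      = 2 * (Real.sin c : ℂ) / (c : ℂ) := by
  have hcC : (c : ℂ) ≠ 0 := by exact_mod_cast hc
  have hIc : Complex.I * c ≠ 0 := mul_ne_zero Complex.I_ne_zero hcC
  set K : ℝ → ℂ := fun t => Complex.exp (Complex.I * ((c * Real.sin t : ℝ) : ℂ)) / (Complex.I * c)
    with hKdef
  have hK : ∀ t ∈ uIcc (-(π/2)) (π/2), HasDerivAt K
      (Complex.exp (Complex.I * ((c * Real.sin t : ℝ) : ℂ)) * ((Real.cos t : ℝ) : ℂ)) t := by
    intro t _
    have h1 : HasDerivAt (fun u : ℝ => ((Real.sin u : ℝ) : ℂ)) ((Real.cos t : ℝ) : ℂ) t :=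
      (Real.hasDerivAt_sin t).ofReal_comp
    have h2 := h1.const_mul (Complex.I * c)
    have h3 := h2.cexp
    have h4 := h3.div_const (Complex.I * c)
    have hfun : (fun u : ℝ => Complex.exp (Complex.I * c * ((Real.sin u : ℝ) : ℂ)) / (Complex.I * c)) = K := by
      funext u
      rw [hKdef]
      push_cast
      ring_nf
    rw [hfun] at h4
    refine h4.congr_deriv ?_
    have : Complex.I * ((c * Real.sin t : ℝ) : ℂ) = Complex.I * c * ((Real.sin t : ℝ) : ℂ) := by
      push_cast; ring
    rw [this, mul_div_assoc, mul_div_cancel_left₀ _ hIc]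
  have hInt : IntervalIntegrable
      (fun t => Complex.exp (Complex.I * ((c * Real.sin t : ℝ) : ℂ)) * ((Real.cos t : ℝ) : ℂ))
      volume (-(π/2)) (π/2) := by
    apply Continuous.intervalIntegrable
    fun_prop
  rw [integral_eq_sub_of_hasDerivAt hK hInt]
  rw [hKdef]
  simp only [Real.sin_pi_div_two, Real.sin_neg, Real.sin_pi_div_two]
  have e1 : ((c * 1 : ℝ) : ℂ) = (c : ℂ) := by push_cast; ring
  have e2 : ((c * -1 : ℝ) : ℂ) = -(c : ℂ) := by push_cast; ring
  rw [e1, e2]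
  have h3 : Complex.exp (Complex.I * c) - Complex.exp (Complex.I * -c)
      = 2 * (Real.sin c : ℂ) * Complex.I := by
    rw [mul_comm Complex.I (c:ℂ), show Complex.I * -(c:ℂ) = (-(c:ℂ)) * Complex.I by ring]
    rw [Complex.exp_mul_I, Complex.exp_mul_I]
    rw [Complex.cos_neg, Complex.sin_neg]
    push_cast
    ring
  rw [div_sub_div_same, h3]
  rw [div_eq_div_iff hIc hcC]
  ring


/-- With `f(φ,θ) = cos θ / (2π)` on `[-π/2, π/2]²`, for any `λ > 0`
and `(y, z) ≠ (0, 0)`,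
`(1/(2π)) ∫∫ exp(i (2π/λ)(y cos θ sin φ + z sin θ)) cos θ dφ dθ
  = sin(2π √(y² + z²)/λ) / (2π √(y² + z²)/λ)`,
i.e. the expected plane-wave phase factor equals `sinc(2 ‖v‖ / λ)` with `v = (0, y, z)`. -/
theorem stmt_0 (lam y z : ℝ) (hlam : 0 < lam) (hyz : (y, z) ≠ (0, 0)) :
    ((1 / (2 * Real.pi) : ℝ) : ℂ) *
      ∫ θ in (-(Real.pi / 2))..(Real.pi / 2),
        ∫ φ in (-(Real.pi / 2))..(Real.pi / 2),
          Complex.exp (Complex.I *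
              ((2 * Real.pi / lam) * (y * Real.cos θ * Real.sin φ + z * Real.sin θ) : ℝ)) *
            ((Real.cos θ : ℝ) : ℂ)
      = ((Real.sin (2 * Real.pi * Real.sqrt (y ^ 2 + z ^ 2) / lam) /
          (2 * Real.pi * Real.sqrt (y ^ 2 + z ^ 2) / lam) : ℝ) : ℂ) := by
  have hπ : (0:ℝ) < π := Real.pi_pos
  set a : ℝ := 2 * π / lam with ha_def
  have ha : 0 < a := by positivity
  have hyz' : 0 < y ^ 2 + z ^ 2 := by
    rcases (by
      by_contra h
      push_neg at h
      exact hyz (by simp [h.1, h.2]) : y ≠ 0 ∨ z ≠ 0) with h | h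
    · nlinarith [pow_two_pos_of_ne_zero h, sq_nonneg z]
    · nlinarith [pow_two_pos_of_ne_zero h, sq_nonneg y]
  set r : ℝ := Real.sqrt (y ^ 2 + z ^ 2) with hr_def
  have hr : 0 < r := Real.sqrt_pos.2 hyz'
  have hr2 : y ^ 2 + z ^ 2 = r ^ 2 := (Real.sq_sqrt hyz'.le).symm
  have har : a * r ≠ 0 := by positivity
  have hcont : ∀ w1 w2 : ℝ, Continuous (Fw a w1 w2) := by
    intro w1 w2
    unfold Fw
    fun_prop
  have key : (∫ θ in (-(π/2))..(π/2), ∫ φ in (-(π/2))..(π/2), Fw a y z (θ, φ))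
      = π • (2 * (Real.sin (a * r) : ℂ) / ((a * r : ℝ) : ℂ)) := by
    rw [fubini_sq (Fw a y z) (hcont y z), ← disk_to_sq a y z,
      disk_rot a y z r hr hr2, disk_to_sq a 0 r, ← fubini_sq (Fw a 0 r) (hcont 0 r)]
    have e1 : ∀ θ φ : ℝ, Fw a 0 r (θ, φ)
        = Complex.exp (Complex.I * ((a * r * Real.sin θ : ℝ) : ℂ)) * ((Real.cos θ : ℝ) : ℂ) := by
      intro θ φ
      unfold Fw
      norm_num
      left
      push_cast
      ring
    simp_rw [e1, intervalIntegral.integral_const]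
    rw [show (π/2 - -(π/2)) = π by ring]
    rw [intervalIntegral.integral_smul]
    rw [int_exp_sin (a * r) har]
  have goal_eq : (∫ θ in (-(π/2))..(π/2), ∫ φ in (-(π/2))..(π/2),
      Complex.exp (Complex.I *
        ((a * (y * Real.cos θ * Real.sin φ + z * Real.sin θ) : ℝ) : ℂ)) *
        ((Real.cos θ : ℝ) : ℂ))
      = ∫ θ in (-(π/2))..(π/2), ∫ φ in (-(π/2))..(π/2), Fw a y z (θ, φ) := rfl
  rw [goal_eq, key]
  have harg : 2 * π * r / lam = a * r := by rw [ha_def]; ring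
  rw [harg]
  have hπC : ((π:ℝ) : ℂ) ≠ 0 := by exact_mod_cast hπ.ne'
  have harC : ((a * r : ℝ) : ℂ) ≠ 0 := by exact_mod_cast har
  rw [Complex.real_smul, Complex.ofReal_div (Real.sin (a*r)) (a*r)]
  have e3 : ((1/(2*π):ℝ):ℂ) * (((π:ℝ):ℂ) * (2 * ((Real.sin (a*r) : ℝ):ℂ) / ((a*r : ℝ):ℂ)))
      = (((1/(2*π):ℝ):ℂ) * ((π:ℝ):ℂ) * 2) * (((Real.sin (a*r):ℝ):ℂ) / ((a*r:ℝ):ℂ)) := by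
    ring
  rw [e3]
  have e4 : (((1/(2*π):ℝ):ℂ) * ((π:ℝ):ℂ) * 2) = 1 := by
    push_cast
    field_simp
  rw [e4, one_mul]
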